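/- Let G be a finitely generated group with finitely generated center. Then G has property FGFPa if and only if for every group homomorphism ν : G/Z(G) → Z(G) and every automorphism φ of G, the kernel of the homomorphism θ : Fix φ̄ → Z(G)/I_φ defined by θ(gZ(G)) = g⁻¹·φ(g)·ν(gZ(G))·I_φ is finitely generated. (Case n = 1 of Theorem B of the paper.) -/

import Mathlib

/-- The subgroup of fixed points of an automorphism `φ` of `G`:
`Fix φ = {g ∈ G | φ(g) = g}`. -/
def fixedSubgroup {G : Type*} [Group G] (φ : G ≃* G) : Subgroup G where
  carrier := {g | φ g = g}
  one_mem' := map_one φ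
  mul_mem' := by
    intro a b ha hb
    simp only [Set.mem_setOf_eq, map_mul] at *
    rw [ha, hb]
  inv_mem' := by
    intro a ha
    simp only [Set.mem_setOf_eq, map_inv] at *
    rw [ha]

lemma center_apply_mem {G : Type*} [Group G] (φ : G ≃* G) {z : G}
    (hz : z ∈ Subgroup.center G) : φ z ∈ Subgroup.center G := by
  rw [Subgroup.mem_center_iff]
  intro g
  calc g * φ z = φ (φ.symm g) * φ z := by rw [MulEquiv.apply_symm_apply]
    _ = φ (φ.symm g * z) := by rw [map_mul]
    _ = φ (z * φ.symm g) := by rw [Subgroup.mem_center_iff.mp hz (φ.symm g)]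
    _ = φ z * φ (φ.symm g) := by rw [map_mul]
    _ = φ z * g := by rw [MulEquiv.apply_symm_apply]

/-- The subgroup `I_φ = {z⁻¹ * φ(z) | z ∈ Z(G)}` of `G` (contained in `Z(G)`). -/
def Iphi {G : Type*} [Group G] (φ : G ≃* G) : Subgroup G where
  carrier := {x | ∃ z ∈ Subgroup.center G, x = z⁻¹ * φ z}
  one_mem' := ⟨1, Subgroup.one_mem _, by simp⟩
  mul_mem' := by
    rintro a b ⟨z₁, hz₁, rfl⟩ ⟨z₂, hz₂, rfl⟩
    refine ⟨z₁ * z₂, mul_mem hz₁ hz₂, ?_⟩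
    have hc : z₂⁻¹ * (z₁⁻¹ * φ z₁) = (z₁⁻¹ * φ z₁) * z₂⁻¹ :=
      Subgroup.mem_center_iff.mp (mul_mem (inv_mem hz₁) (center_apply_mem φ hz₁)) z₂⁻¹
    calc z₁⁻¹ * φ z₁ * (z₂⁻¹ * φ z₂)
        = ((z₁⁻¹ * φ z₁) * z₂⁻¹) * φ z₂ := by simp [mul_assoc]
      _ = (z₂⁻¹ * (z₁⁻¹ * φ z₁)) * φ z₂ := by rw [hc]
      _ = (z₁ * z₂)⁻¹ * φ (z₁ * z₂) := by rw [map_mul, mul_inv_rev]; simp [mul_assoc]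
  inv_mem' := by
    rintro a ⟨z, hz, rfl⟩
    refine ⟨z⁻¹, inv_mem hz, ?_⟩
    have h : Commute z (φ z) := Subgroup.mem_center_iff.mp (center_apply_mem φ hz) z
    rw [mul_inv_rev, inv_inv, map_inv]
    exact h.inv_right.eq.symm

lemma Iphi_le_center {G : Type*} [Group G] (φ : G ≃* G) :
    Iphi φ ≤ Subgroup.center G := by
  rintro x ⟨z, hz, rfl⟩
  exact mul_mem (inv_mem hz) (center_apply_mem φ hz)

/-- `I_φ` viewed as a subgroup of the center `Z(G)`. -/
def IphiZ {G : Type*} [Group G] (φ : G ≃* G) : Subgroup ↥(Subgroup.center G) :=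
  (Iphi φ).comap (Subgroup.center G).subtype

/-- A group `G` has property FGFPa if the fixed subgroup of every automorphism of `G`
is finitely generated. -/
def FGFPa (G : Type*) [Group G] : Prop :=
  ∀ φ : G ≃* G, Group.FG ↥(fixedSubgroup φ)



lemma central_comm {G : Type*} [Group G] {z : G} (hz : z ∈ Subgroup.center G) (g : G) :
    g * z = z * g := Subgroup.mem_center_iff.mp hz g

lemma fg_subgroup_of_comm {C : Type*} [CommGroup C] (hC : Group.FG C) (H : Subgroup C) :
    Group.FG ↥H := by
  rw [Group.fg_iff_subgroup_fg, Subgroup.fg_iff_add_fg]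
  haveI : AddGroup.FG (Additive C) := GroupFG.iff_add_fg.mp hC
  haveI : Module.Finite ℤ (Additive C) := Module.Finite.iff_addGroup_fg.mpr ‹_›
  have h := IsNoetherian.noetherian (AddSubgroup.toIntSubmodule H.toAddSubgroup)
  rwa [Submodule.fg_iff_addSubgroup_fg, AddSubgroup.toIntSubmodule_toAddSubgroup] at h

lemma fg_of_normal_of_quotient {P : Type*} [Group P] (N : Subgroup P) [N.Normal]
    (hN : Group.FG ↥N) (hQ : Group.FG (P ⧸ N)) : Group.FG P := by
  obtain ⟨S₀, hS₀, hS₀f⟩ := Group.fg_iff.mp hN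
  obtain ⟨T₀, hT₀, hT₀f⟩ := Group.fg_iff.mp hQ
  set S : Set P := Subtype.val '' S₀ with hSdef
  have hSclos : Subgroup.closure S = N := by
    have : S = ⇑N.subtype '' S₀ := rfl
    rw [this, ← MonoidHom.map_closure, hS₀, ← MonoidHom.range_eq_map, N.range_subtype]
  set f := Function.surjInv (QuotientGroup.mk'_surjective N) with hf
  set T : Set P := f '' T₀ with hTdef
  have hmkT : (QuotientGroup.mk' N) '' T = T₀ := by
    rw [hTdef, Set.image_image]
    have : ∀ x, (QuotientGroup.mk' N) (f x) = x :=
      Function.rightInverse_surjInv (QuotientGroup.mk'_surjective N)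
    simp [this]
  refine Group.fg_iff.mpr ⟨S ∪ T, ?_, (hS₀f.image _).union (hT₀f.image _)⟩
  have hNle : N ≤ Subgroup.closure (S ∪ T) := by
    rw [← hSclos]; exact Subgroup.closure_mono Set.subset_union_left
  have hmap : Subgroup.map (QuotientGroup.mk' N) (Subgroup.closure (S ∪ T)) = ⊤ := by
    apply top_unique
    rw [← hT₀, ← hmkT, ← MonoidHom.map_closure]
    exact Subgroup.map_mono (Subgroup.closure_mono Set.subset_union_right)
  have := congrArg (Subgroup.comap (QuotientGroup.mk' N)) hmap
  rwa [Subgroup.comap_map_eq, QuotientGroup.ker_mk', sup_of_le_left hNle,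
    Subgroup.comap_top] at this


/-- (Theorem B with n = 1.) A finitely generated group `G` with
finitely generated center has FGFPa iff for every homomorphism `ν : G/Z(G) → Z(G)` and
every automorphism `φ` of `G`, the kernel of
`θ : Fix φ̄ → Z(G)/I_φ`, `gZ(G) ↦ g⁻¹·φ(g)·ν(gZ(G))·I_φ`, is finitely generated. -/
theorem FGFPa_iff_ker_theta_fg {G : Type*} [Group G]
    (hG : Group.FG G) (hZ : Group.FG ↥(Subgroup.center G)) :
    FGFPa G ↔
      ∀ (φ : G ≃* G)
        (φbar : (G ⧸ Subgroup.center G) ≃* (G ⧸ Subgroup.center G)),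
        (∀ g : G, φbar (QuotientGroup.mk g) = QuotientGroup.mk (φ g)) →
        ∀ (ν : (G ⧸ Subgroup.center G) →* ↥(Subgroup.center G))
          (θ : ↥(fixedSubgroup φbar) →* (↥(Subgroup.center G) ⧸ IphiZ φ)),
          (∀ (g : G) (hg : g⁻¹ * φ g ∈ Subgroup.center G)
            (hmem : (QuotientGroup.mk g : G ⧸ Subgroup.center G) ∈ fixedSubgroup φbar),
            θ ⟨QuotientGroup.mk g, hmem⟩ =
              QuotientGroup.mk
                ((⟨g⁻¹ * φ g, hg⟩ : ↥(Subgroup.center G)) * ν (QuotientGroup.mk g))) →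
          Group.FG ↥(MonoidHom.ker θ) := by
  set Z := Subgroup.center G with hZdef
  constructor
  · -- forward direction
    intro hFG φ φbar hcompat ν θ hθ
    -- the modified automorphism ψ(g) = φ(g) * ν(gZ)
    set ψ₀ : G →* G := MonoidHom.mk' (fun g => φ g * (ν (QuotientGroup.mk g) : G)) (by
      intro a b
      have hc := central_comm (ν (QuotientGroup.mk a)).2 (φ b)
      simp only [map_mul, QuotientGroup.mk_mul, Subgroup.coe_mul]
      calc φ a * φ b * ((ν (QuotientGroup.mk a) : G) * (ν (QuotientGroup.mk b) : G))
          = φ a * (φ b * (ν (QuotientGroup.mk a) : G)) * (ν (QuotientGroup.mk b) : G) := by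
            group
        _ = φ a * ((ν (QuotientGroup.mk a) : G) * φ b) * (ν (QuotientGroup.mk b) : G) := by
            rw [hc]
        _ = φ a * (ν (QuotientGroup.mk a) : G) * (φ b * (ν (QuotientGroup.mk b) : G)) := by
            group) with hψ₀
    have hψ₀app : ∀ g : G, ψ₀ g = φ g * (ν (QuotientGroup.mk g) : G) := fun _ => rfl
    have hinj : Function.Injective ψ₀ := by
      rw [injective_iff_map_eq_one]
      intro g hg
      rw [hψ₀app] at hg
      have hφgZ : φ g ∈ Z := by
        have : φ g = (ν (QuotientGroup.mk g) : G)⁻¹ := by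
          rw [eq_inv_iff_mul_eq_one]; exact hg
        rw [this]; exact inv_mem (ν (QuotientGroup.mk g)).2
      have hgZ : g ∈ Z := by
        have := center_apply_mem φ.symm hφgZ
        simpa using this
      have hmk1 : (QuotientGroup.mk g : G ⧸ Z) = 1 := (QuotientGroup.eq_one_iff g).mpr hgZ
      rw [hmk1, map_one] at hg
      simp only [OneMemClass.coe_one, mul_one] at hg
      have : φ g = φ 1 := by rw [map_one]; exact hg
      exact φ.injective this
    have hsurj : Function.Surjective ψ₀ := by
      intro h
      set c := ν (QuotientGroup.mk (φ.symm h) : G ⧸ Z) with hcdef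
      set z := φ.symm ((c : G)⁻¹) with hzdef
      have hzZ : z ∈ Z := center_apply_mem φ.symm (inv_mem c.2)
      refine ⟨φ.symm h * z, ?_⟩
      have hmkz : (QuotientGroup.mk z : G ⧸ Z) = 1 := (QuotientGroup.eq_one_iff z).mpr hzZ
      have hmk : (QuotientGroup.mk (φ.symm h * z) : G ⧸ Z) = QuotientGroup.mk (φ.symm h) := by
        rw [QuotientGroup.mk_mul, hmkz, mul_one]
      rw [hψ₀app, hmk, map_mul, MulEquiv.apply_symm_apply, MulEquiv.apply_symm_apply, ← hcdef]
      group
    set ψ : G ≃* G := MulEquiv.ofBijective ψ₀ ⟨hinj, hsurj⟩ with hψdef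
    have hψapp : ∀ g : G, ψ g = φ g * (ν (QuotientGroup.mk g) : G) := fun _ => rfl
    haveI := hFG ψ
    -- facts about elements of Fix ψ
    have hfix : ∀ g : G, g ∈ fixedSubgroup ψ → φ g * (ν (QuotientGroup.mk g) : G) = g :=
      fun g hg => hg
    have hcent : ∀ g : G, g ∈ fixedSubgroup ψ → g⁻¹ * φ g ∈ Z := by
      intro g hg
      have h1 := hfix g hg
      have : g⁻¹ * φ g = (ν (QuotientGroup.mk g) : G)⁻¹ := by
        rw [eq_inv_iff_mul_eq_one]
        calc g⁻¹ * φ g * (ν (QuotientGroup.mk g) : G)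
            = g⁻¹ * (φ g * (ν (QuotientGroup.mk g) : G)) := by rw [mul_assoc]
          _ = g⁻¹ * g := by rw [h1]
          _ = 1 := by group
      rw [this]; exact inv_mem (ν (QuotientGroup.mk g)).2
    have hmem : ∀ g : G, g ∈ fixedSubgroup ψ →
        (QuotientGroup.mk g : G ⧸ Z) ∈ fixedSubgroup φbar := by
      intro g hg
      show φbar (QuotientGroup.mk g) = QuotientGroup.mk g
      rw [hcompat g]
      have : φ g = g * (g⁻¹ * φ g) := by group
      rw [this, QuotientGroup.mk_mul, (QuotientGroup.eq_one_iff _).mpr (hcent g hg), mul_one]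
    have hker : ∀ (g : G) (hg : g ∈ fixedSubgroup ψ),
        (⟨QuotientGroup.mk g, hmem g hg⟩ : ↥(fixedSubgroup φbar)) ∈ MonoidHom.ker θ := by
      intro g hg
      rw [MonoidHom.mem_ker, hθ g (hcent g hg) (hmem g hg)]
      have hval : (⟨g⁻¹ * φ g, hcent g hg⟩ : ↥Z) * ν (QuotientGroup.mk g) = 1 := by
        ext
        show (g⁻¹ * φ g) * (ν (QuotientGroup.mk g) : G) = 1
        calc (g⁻¹ * φ g) * (ν (QuotientGroup.mk g) : G)
            = g⁻¹ * (φ g * (ν (QuotientGroup.mk g) : G)) := by group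
          _ = g⁻¹ * g := by rw [hfix g hg]
          _ = 1 := by group
      rw [hval, QuotientGroup.mk_one]
    set p : ↥(fixedSubgroup ψ) →* ↥(MonoidHom.ker θ) :=
      MonoidHom.mk' (fun x => ⟨⟨QuotientGroup.mk x.1, hmem x.1 x.2⟩, hker x.1 x.2⟩) (by
        intro a b
        ext
        rfl) with hp
    have hpsurj : Function.Surjective p := by
      rintro ⟨⟨x, hx⟩, hk⟩
      obtain ⟨g, rfl⟩ := QuotientGroup.mk_surjective x
      have hgc : g⁻¹ * φ g ∈ Z := by
        have h1 : φbar (QuotientGroup.mk g) = QuotientGroup.mk g := hx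
        rw [hcompat g] at h1
        have := QuotientGroup.eq.mp h1
        simpa using inv_mem this
      have hth := hθ g hgc hx
      rw [MonoidHom.mem_ker.mp hk] at hth
      have hIZ : (⟨g⁻¹ * φ g, hgc⟩ : ↥Z) * ν (QuotientGroup.mk g) ∈ IphiZ φ :=
        (QuotientGroup.eq_one_iff _).mp hth.symm
      obtain ⟨z, hzZ, hzeq⟩ := hIZ
      -- hzeq : (g⁻¹ * φ g) * ν(mk g) = z⁻¹ * φ z  (in G)
      have hzeq' : (g⁻¹ * φ g) * (ν (QuotientGroup.mk g) : G) = z⁻¹ * φ z := hzeq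
      have hw : g * z⁻¹ ∈ fixedSubgroup ψ := by
        show ψ (g * z⁻¹) = g * z⁻¹
        have hmkz : (QuotientGroup.mk z⁻¹ : G ⧸ Z) = 1 :=
          (QuotientGroup.eq_one_iff _).mpr (inv_mem hzZ)
        rw [hψapp, QuotientGroup.mk_mul, hmkz, mul_one, map_mul, map_inv]
        have hcν := central_comm (ν (QuotientGroup.mk g)).2 ((φ z)⁻¹)
        calc φ g * (φ z)⁻¹ * (ν (QuotientGroup.mk g) : G)
            = φ g * ((φ z)⁻¹ * (ν (QuotientGroup.mk g) : G)) := by group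
          _ = φ g * ((ν (QuotientGroup.mk g) : G) * (φ z)⁻¹) := by rw [hcν]
          _ = g * ((g⁻¹ * φ g) * (ν (QuotientGroup.mk g) : G)) * (φ z)⁻¹ := by group
          _ = g * (z⁻¹ * φ z) * (φ z)⁻¹ := by rw [hzeq']
          _ = g * z⁻¹ := by group
      refine ⟨⟨g * z⁻¹, hw⟩, ?_⟩
      ext
      show (QuotientGroup.mk (g * z⁻¹) : G ⧸ Z) = QuotientGroup.mk g
      rw [QuotientGroup.mk_mul, (QuotientGroup.eq_one_iff _).mpr (inv_mem hzZ), mul_one]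
    exact Group.fg_of_surjective hpsurj
  · -- reverse direction
    intro h φ
    have hmapc : Subgroup.map (φ : G →* G) Z = Z := by
      ext x
      constructor
      · rintro ⟨z, hz, rfl⟩
        exact center_apply_mem φ hz
      · intro hx
        exact ⟨φ.symm x, center_apply_mem φ.symm hx, φ.apply_symm_apply x⟩
    set φbar : (G ⧸ Z) ≃* (G ⧸ Z) := QuotientGroup.congr Z Z φ hmapc with hφbar
    have hcompat : ∀ g : G, φbar (QuotientGroup.mk g) = QuotientGroup.mk (φ g) :=
      fun g => rfl
    -- the subgroup K = preimage of Fix φbar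
    set K : Subgroup G := (fixedSubgroup φbar).comap (QuotientGroup.mk' Z) with hK
    have hKc : ∀ g : G, g ∈ K → g⁻¹ * φ g ∈ Z := by
      intro g hg
      have h1 : φbar (QuotientGroup.mk g) = QuotientGroup.mk g := hg
      rw [hcompat g] at h1
      simpa using inv_mem (QuotientGroup.eq.mp h1)
    set Θ : ↥K →* ↥Z := MonoidHom.mk' (fun k => ⟨(k : G)⁻¹ * φ k, hKc k.1 k.2⟩) (by
      rintro ⟨a, ha⟩ ⟨b, hb⟩
      ext
      show (a * b)⁻¹ * φ (a * b) = (a⁻¹ * φ a) * (b⁻¹ * φ b)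
      have hc := central_comm (hKc a ha) b⁻¹
      rw [map_mul, mul_inv_rev]
      calc b⁻¹ * a⁻¹ * (φ a * φ b) = (b⁻¹ * (a⁻¹ * φ a)) * φ b := by group
        _ = ((a⁻¹ * φ a) * b⁻¹) * φ b := by rw [← hc]
        _ = (a⁻¹ * φ a) * (b⁻¹ * φ b) := by group) with hΘ
    set Θ' : ↥K →* (↥Z ⧸ IphiZ φ) := (QuotientGroup.mk' (IphiZ φ)).comp Θ with hΘ'
    set e : ↥K →* ↥(fixedSubgroup φbar) :=
      MonoidHom.mk' (fun k => ⟨QuotientGroup.mk k.1, k.2⟩) (by intro a b; ext; rfl) with he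
    have hesurj : Function.Surjective e := by
      rintro ⟨x, hx⟩
      obtain ⟨g, rfl⟩ := QuotientGroup.mk_surjective x
      exact ⟨⟨g, hx⟩, rfl⟩
    have hkerle : MonoidHom.ker e ≤ MonoidHom.ker Θ' := by
      rintro ⟨g, hg⟩ hke
      have hg1 : (QuotientGroup.mk g : G ⧸ Z) = 1 := by
        have := congrArg Subtype.val (MonoidHom.mem_ker.mp hke)
        exact this
      have hgZ : g ∈ Z := (QuotientGroup.eq_one_iff g).mp hg1
      rw [MonoidHom.mem_ker, hΘ', MonoidHom.comp_apply]
      rw [QuotientGroup.mk'_apply, QuotientGroup.eq_one_iff]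
      exact ⟨g, hgZ, rfl⟩
    set finv := Function.surjInv hesurj with hfinv
    have hri : Function.RightInverse finv e := Function.rightInverse_surjInv hesurj
    set θ : ↥(fixedSubgroup φbar) →* (↥Z ⧸ IphiZ φ) :=
      e.liftOfRightInverse finv hri ⟨Θ', hkerle⟩ with hθdef
    have hθe : ∀ k : ↥K, θ (e k) = Θ' k :=
      fun k => e.liftOfRightInverse_comp_apply finv hri ⟨Θ', hkerle⟩ k
    have hθprop : ∀ (g : G) (hg : g⁻¹ * φ g ∈ Z)
        (hmem : (QuotientGroup.mk g : G ⧸ Z) ∈ fixedSubgroup φbar),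
        θ ⟨QuotientGroup.mk g, hmem⟩ =
          QuotientGroup.mk ((⟨g⁻¹ * φ g, hg⟩ : ↥Z) *
            (1 : (G ⧸ Z) →* ↥Z) (QuotientGroup.mk g)) := by
      intro g hg hmem
      have hgK : g ∈ K := hmem
      have h1 : (⟨QuotientGroup.mk g, hmem⟩ : ↥(fixedSubgroup φbar)) = e ⟨g, hgK⟩ := rfl
      rw [h1, hθe ⟨g, hgK⟩]
      simp only [MonoidHom.one_apply, mul_one]
      rfl
    have hfgker := h φ φbar hcompat 1 θ hθprop
    -- now deduce that Fix φ is finitely generated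
    -- the map s : Fix φ → ker θ
    have hsm : ∀ g : G, g ∈ fixedSubgroup φ →
        (QuotientGroup.mk g : G ⧸ Z) ∈ fixedSubgroup φbar := by
      intro g hg
      show φbar (QuotientGroup.mk g) = QuotientGroup.mk g
      rw [hcompat g, hg]
    have hsc : ∀ g : G, g ∈ fixedSubgroup φ → g⁻¹ * φ g ∈ Z := by
      intro g hg
      have : g⁻¹ * φ g = 1 := by rw [hg]; group
      rw [this]; exact one_mem Z
    have hsk : ∀ (g : G) (hg : g ∈ fixedSubgroup φ),
        (⟨QuotientGroup.mk g, hsm g hg⟩ : ↥(fixedSubgroup φbar)) ∈ MonoidHom.ker θ := by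
      intro g hg
      rw [MonoidHom.mem_ker, hθprop g (hsc g hg) (hsm g hg)]
      have : (⟨g⁻¹ * φ g, hsc g hg⟩ : ↥Z) * (1 : (G ⧸ Z) →* ↥Z) (QuotientGroup.mk g) = 1 := by
        ext
        show (g⁻¹ * φ g) * ((1 : ↥Z) : G) = 1
        rw [hg]
        simp
      rw [this, QuotientGroup.mk_one]
    set s : ↥(fixedSubgroup φ) →* ↥(MonoidHom.ker θ) :=
      MonoidHom.mk' (fun x => ⟨⟨QuotientGroup.mk x.1, hsm x.1 x.2⟩, hsk x.1 x.2⟩) (by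
        intro a b; ext; rfl) with hs
    have hssurj : Function.Surjective s := by
      rintro ⟨⟨x, hx⟩, hk⟩
      obtain ⟨g, rfl⟩ := QuotientGroup.mk_surjective x
      have hgc : g⁻¹ * φ g ∈ Z := by
        have h1 : φbar (QuotientGroup.mk g) = QuotientGroup.mk g := hx
        rw [hcompat g] at h1
        simpa using inv_mem (QuotientGroup.eq.mp h1)
      have hth := hθprop g hgc hx
      rw [MonoidHom.mem_ker.mp hk] at hth
      simp only [MonoidHom.one_apply, mul_one] at hth
      have hIZ : (⟨g⁻¹ * φ g, hgc⟩ : ↥Z) ∈ IphiZ φ :=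
        (QuotientGroup.eq_one_iff _).mp hth.symm
      obtain ⟨z, hzZ, hzeq⟩ := hIZ
      have hzeq' : g⁻¹ * φ g = z⁻¹ * φ z := hzeq
      have hw : g * z⁻¹ ∈ fixedSubgroup φ := by
        show φ (g * z⁻¹) = g * z⁻¹
        rw [map_mul, map_inv]
        calc φ g * (φ z)⁻¹ = g * (g⁻¹ * φ g) * (φ z)⁻¹ := by group
          _ = g * (z⁻¹ * φ z) * (φ z)⁻¹ := by rw [hzeq']
          _ = g * z⁻¹ := by group
      refine ⟨⟨g * z⁻¹, hw⟩, ?_⟩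
      ext
      show (QuotientGroup.mk (g * z⁻¹) : G ⧸ Z) = QuotientGroup.mk g
      rw [QuotientGroup.mk_mul, (QuotientGroup.eq_one_iff _).mpr (inv_mem hzZ), mul_one]
    -- kernel of s is (isomorphic to) a subgroup of the center, hence fg
    have hkerZ : ∀ x : ↥(fixedSubgroup φ), x ∈ MonoidHom.ker s → (x : G) ∈ Z := by
      intro x hx
      have h1 := congrArg (fun y => ((y : ↥(MonoidHom.ker θ)) : ↥(fixedSubgroup φbar)).1)
        (MonoidHom.mem_ker.mp hx)
      have h2 : (QuotientGroup.mk (x : G) : G ⧸ Z) = 1 := h1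
      exact (QuotientGroup.eq_one_iff _).mp h2
    set j : ↥(MonoidHom.ker s) →* ↥Z :=
      MonoidHom.mk' (fun y => ⟨(y.1 : G), hkerZ y.1 y.2⟩) (by intro a b; ext; rfl) with hj
    have hjinj : Function.Injective j := by
      rintro ⟨⟨a, ha⟩, ha'⟩ ⟨⟨b, hb⟩, hb'⟩ hab
      have : a = b := congrArg Subtype.val hab
      ext
      exact this
    have hNfg : Group.FG ↥(MonoidHom.ker s) := by
      letI : CommGroup ↥Z := { Z.toGroup with
        mul_comm := fun a b => Subtype.ext (central_comm a.2 (b : G)).symm }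
      have hr := fg_subgroup_of_comm hZ j.range
      haveI := hr
      exact Group.fg_of_surjective (f := (MonoidHom.ofInjective hjinj).symm.toMonoidHom)
        (MonoidHom.ofInjective hjinj).symm.surjective
    have hQfg : Group.FG (↥(fixedSubgroup φ) ⧸ MonoidHom.ker s) := by
      haveI := hfgker
      exact Group.fg_of_surjective
        (f := (QuotientGroup.quotientKerEquivOfSurjective s hssurj).symm.toMonoidHom)
        (QuotientGroup.quotientKerEquivOfSurjective s hssurj).symm.surjective
    exact fg_of_normal_of_quotient (MonoidHom.ker s) hNfg hQfg
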